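/- A unit circle centered at E = (x_E, y_E) and the parabola y² = 2px + p² (p ≠ 0, focus at the origin) form a 3-Poncelet pair (Cayley condition A₂ = 0) if and only if x_E² + y_E² = 1, i.e., if and only if the focus (0,0) lies on the circle. In particular, the condition is independent of p, so the whole confocal family of parabolas is 3-isoperiodic with the circle. -/

import Mathlib

/-- the unit circle centered at `E = (x_E,y_E)` and the parabola
`y² = 2px + p²` (`p ≠ 0`, focus at the origin) form a 3-Poncelet pair (Cayley
condition `A₂ = 0`) if and only if the focus `(0,0)` lies on the circle, i.e.
`(0−x_E)² + (0−y_E)² = 1`.  Since `p` is arbitrary, the condition is independent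
of `p`: the whole confocal family is 3-isoperiodic with the circle. -/
theorem stmt6 (xE yE p : ℝ) (hp : p ≠ 0) (A₀ : ℂ) (hA₀ : A₀ ^ 2 = -(p : ℂ) ^ 2)
    (y : PowerSeries ℂ)
    (hy : y ^ 2 = PowerSeries.C ((-p ^ 2 : ℝ) : ℂ)
      + PowerSeries.C ((-2 * p ^ 2 - 2 * p * xE : ℝ) : ℂ) * PowerSeries.X
      + PowerSeries.C ((-p ^ 2 - 2 * p * xE + yE ^ 2 - 1 : ℝ) : ℂ) * PowerSeries.X ^ 2
      + PowerSeries.C ((-1 : ℝ) : ℂ) * PowerSeries.X ^ 3)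
    (h0 : PowerSeries.coeff 0 y = A₀) :
    PowerSeries.coeff 2 y = 0 ↔ (0 - xE) ^ 2 + (0 - yE) ^ 2 = 1 := by
  set a0 := PowerSeries.coeff 0 y with ha0
  set a1 := PowerSeries.coeff 1 y with ha1
  set a2 := PowerSeries.coeff 2 y with ha2
  have hpC : (p : ℂ) ≠ 0 := by exact_mod_cast hp
  have E0 : a0 ^ 2 = -(p : ℂ) ^ 2 := by rw [h0]; exact hA₀
  have E1 : 2 * a0 * a1 = -2 * (p : ℂ) ^ 2 - 2 * (p : ℂ) * (xE : ℂ) := by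
    have h := congrArg (PowerSeries.coeff 1) hy
    simp [pow_two, PowerSeries.coeff_mul, Finset.Nat.sum_antidiagonal_eq_sum_range_succ_mk,
      Finset.sum_range_succ, PowerSeries.coeff_X_pow, PowerSeries.coeff_X, ← PowerSeries.coeff_zero_eq_constantCoeff] at h
    rw [← ha0, ← ha1] at h
    linear_combination h
  have E2 : 2 * a0 * a2 + a1 ^ 2 = -(p : ℂ) ^ 2 - 2 * (p : ℂ) * (xE : ℂ) + (yE : ℂ) ^ 2 - 1 := by
    have h := congrArg (PowerSeries.coeff 2) hy
    simp [pow_two, PowerSeries.coeff_mul, Finset.Nat.sum_antidiagonal_eq_sum_range_succ_mk,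
      Finset.sum_range_succ, PowerSeries.coeff_X_pow, PowerSeries.coeff_X, ← PowerSeries.coeff_zero_eq_constantCoeff] at h
    rw [← ha0, ← ha1, ← ha2] at h
    linear_combination h
  have ha0ne : a0 ≠ 0 := by
    intro h
    apply hpC
    have h2 : (p : ℂ) ^ 2 = 0 := by rw [h] at E0; linear_combination E0
    exact pow_eq_zero_iff (n := 2) (by norm_num) |>.mp h2
  have key : 2 * a0 * a2 = ((xE : ℂ) ^ 2 + (yE : ℂ) ^ 2 - 1) := by
    have h4 : (4 * (p : ℂ) ^ 2) * (2 * a0 * a2)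
        = (4 * (p : ℂ) ^ 2) * ((xE : ℂ) ^ 2 + (yE : ℂ) ^ 2 - 1) := by
      linear_combination (4 * (p:ℂ)^2) * E2
        + (2*a0*a1 + (-2*(p:ℂ)^2 - 2*(p:ℂ)*(xE:ℂ))) * E1 - 4 * a1^2 * E0
    have h4ne : (4 * (p : ℂ) ^ 2) ≠ 0 := by
      simp [hpC]
    exact mul_left_cancel₀ h4ne h4
  constructor
  · intro h
    rw [h, mul_zero] at key
    have hc : ((xE ^ 2 + yE ^ 2 - 1 : ℝ) : ℂ) = 0 := by push_cast; linear_combination -key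
    have hr : xE ^ 2 + yE ^ 2 - 1 = 0 := by exact_mod_cast hc
    nlinarith [hr]
  · intro h
    have hr : (xE : ℂ) ^ 2 + (yE : ℂ) ^ 2 - 1 = 0 := by
      have : ((xE ^ 2 + yE ^ 2 - 1 : ℝ) : ℂ) = ((0 : ℝ) : ℂ) := by
        norm_cast; nlinarith [h]
      push_cast at this
      linear_combination this
    rw [hr] at key
    have h2 : (2 : ℂ) * a0 ≠ 0 := by
      simp [ha0ne]
    exact (mul_eq_zero.mp key).resolve_left h2
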